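/- Let M be a Riemannian manifold with volume V and f: M → M a diffeomorphism with |det Df| ≤ a < 1 everywhere. Then the set of negatively recurrent points of f has V-measure zero. -/

import Mathlib

open MeasureTheory Set Filter

/-- Let `M` be a Riemannian manifold (abstractly: a locally compact, σ-compact space with a
Borel measure `μ` finite on compacts) and `f` a diffeomorphism with Jacobian bounded by
`a ∈ (0,1)` (abstractly: `μ(f(s)) ≤ a·μ(s)`). Then the set of negatively recurrent points
of `f` has measure zero. -/
theorem negatively_recurrent_set_null
    {M : Type*} [TopologicalSpace M] [MeasurableSpace M] [BorelSpace M]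
    [T2Space M] [LocallyCompactSpace M] [SigmaCompactSpace M]
    (μ : Measure M) [IsFiniteMeasureOnCompacts μ]
    (f : M ≃ₜ M)
    (a : ℝ) (ha : a ∈ Set.Ioo (0:ℝ) 1)
    (hcontr : ∀ s : Set M, MeasurableSet s → μ (f '' s) ≤ ENNReal.ofReal a * μ s) :
    μ {x : M | ∃ n : ℕ → ℕ, StrictMono n ∧
        Tendsto (fun k => (f.symm : M → M)^[n k] x) atTop (nhds x)} = 0 := by
  set g : M → M := (f.symm : M → M) with hg
  -- choose a countable cover by open sets of finite measure
  have hcov : ∀ i : ℕ, ∃ U : Set M, IsOpen U ∧ μ U < ⊤ ∧ compactCovering M i ⊆ U := by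
    intro i
    obtain ⟨K, hK, hsub⟩ := exists_compact_superset (isCompact_compactCovering M i)
    exact ⟨interior K, isOpen_interior, lt_of_le_of_lt (measure_mono interior_subset)
      hK.measure_lt_top, hsub⟩
  choose U hUopen hUfin hUsub using hcov
  -- main null set
  set s : ℕ → ℕ → Set M := fun i n => g^[n] ⁻¹' (U i) with hs
  have hpre : ∀ i n, μ (s i (n+1)) ≤ ENNReal.ofReal a * μ (s i n) := by
    intro i n
    have h1 : s i (n+1) = f.symm ⁻¹' (s i n) := by
      simp only [hs]
      rw [Function.iterate_succ]
      rfl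
    have h2 : f.symm ⁻¹' (s i n) = f '' (s i n) := (f.toEquiv.image_eq_preimage_symm _).symm
    have hmeas : MeasurableSet (s i n) :=
      ((hUopen i).preimage ((f.symm.continuous).iterate n)).measurableSet
    rw [h1, h2]
    exact hcontr _ hmeas
  have hbound : ∀ i n, μ (s i n) ≤ (ENNReal.ofReal a)^n * μ (U i) := by
    intro i n
    induction n with
    | zero => simp [hs]
    | succ n ih =>
      calc μ (s i (n+1)) ≤ ENNReal.ofReal a * μ (s i n) := hpre i n
        _ ≤ ENNReal.ofReal a * ((ENNReal.ofReal a)^n * μ (U i)) := by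
            exact mul_le_mul_right ih _
        _ = (ENNReal.ofReal a)^(n+1) * μ (U i) := by ring
  have hlimsup : ∀ i, μ (limsup (s i) atTop) = 0 := by
    intro i
    apply measure_limsup_atTop_eq_zero
    have hsum : ∑' n, μ (s i n) ≤ ∑' n, (ENNReal.ofReal a)^n * μ (U i) :=
      ENNReal.tsum_le_tsum (hbound i)
    have : ∑' n : ℕ, (ENNReal.ofReal a)^n * μ (U i)
        = (1 - ENNReal.ofReal a)⁻¹ * μ (U i) := by
      rw [ENNReal.tsum_mul_right, ENNReal.tsum_geometric]
    refine ne_of_lt (lt_of_le_of_lt hsum ?_)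
    rw [this]
    apply ENNReal.mul_lt_top _ (hUfin i)
    rw [ENNReal.inv_lt_top]
    simp only [tsub_pos_iff_lt]
    exact ENNReal.ofReal_lt_one.mpr ha.2
  -- inclusion
  have hincl : {x : M | ∃ n : ℕ → ℕ, StrictMono n ∧
      Tendsto (fun k => g^[n k] x) atTop (nhds x)} ⊆ ⋃ i, limsup (s i) atTop := by
    intro x hx
    obtain ⟨n, hmono, htend⟩ := hx
    obtain ⟨i, hi⟩ : ∃ i, x ∈ U i := by
      obtain ⟨i, hi⟩ := iUnion_eq_univ_iff.mp (iUnion_compactCovering M) x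
      exact ⟨i, hUsub i hi⟩
    refine mem_iUnion.mpr ⟨i, ?_⟩
    rw [mem_limsup_iff_frequently_mem]
    rw [frequently_atTop]
    intro N
    have hev : ∀ᶠ k in atTop, g^[n k] x ∈ U i :=
      htend.eventually ((hUopen i).mem_nhds hi)
    obtain ⟨k, hkU, hkN⟩ := (hev.and (eventually_ge_atTop N)).exists
    exact ⟨n k, hkN.trans hmono.le_apply, hkU⟩
  exact measure_mono_null hincl (measure_iUnion_null fun i => hlimsup i)
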